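/- Let ζ ∈ ℂ be a primitive 7th root of unity. The space of homogeneous degree-4 polynomials in ℂ[x,y,z] that are invariant under both substitutions (x,y,z) ↦ (ζx, ζ⁴y, ζ²z) and (x,y,z) ↦ (y,z,x) is one-dimensional, spanned by the Klein quartic x³y + y³z + z³x. -/

import Mathlib

open MvPolynomial

private lemma degree_eq_fin3 (d : Fin 3 →₀ ℕ) : d.degree = d 0 + d 1 + d 2 := by
  rw [Finsupp.degree_apply, Finset.sum_subset (Finset.subset_univ _)
    (by intro i _ hi; simpa using hi), Fin.sum_univ_three]

private lemma coeff_diag (ζ : ℂ) (P : MvPolynomial (Fin 3) ℂ) (d : Fin 3 →₀ ℕ) :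
    coeff d (aeval ![C ζ * X 0, C (ζ ^ 4) * X 1, C (ζ ^ 2) * X 2] P)
      = ζ ^ (d 0 + 4 * d 1 + 2 * d 2) * coeff d P := by
  induction P using MvPolynomial.induction_on' with
  | add p q hp hq => rw [map_add, coeff_add, hp, hq, coeff_add, mul_add]
  | monomial u a =>
      rw [aeval_monomial, Finsupp.prod_fintype _ _ (by intro i; simp), Fin.prod_univ_three]
      simp only [Matrix.cons_val_zero, Matrix.cons_val_one, Matrix.head_cons,
        Matrix.cons_val_two, Matrix.tail_cons]
      have key : (algebraMap ℂ (MvPolynomial (Fin 3) ℂ)) a *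
          ((C ζ * X 0) ^ u 0 * (C (ζ ^ 4) * X 1) ^ u 1 * (C (ζ ^ 2) * X 2) ^ u 2)
          = monomial u (ζ ^ (u 0 + 4 * u 1 + 2 * u 2) * a) := by
        rw [monomial_eq, Finsupp.prod_fintype _ _ (by intro i; simp), Fin.prod_univ_three]
        rw [algebraMap_eq, mul_pow, mul_pow, mul_pow, ← C_pow, ← C_pow, ← C_pow,
          ← pow_mul, ← pow_mul, pow_add, pow_add, C_mul, C_mul, C_mul]
        ring
      rw [key, coeff_monomial, coeff_monomial]
      split_ifs with h
      · subst h; ring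
      · ring

private lemma rot_eq (P : MvPolynomial (Fin 3) ℂ) :
    aeval ![X 1, X 2, X 0] P = rename (![1, 2, 0] : Fin 3 → Fin 3) P := by
  have h : (aeval ![X 1, X 2, X 0] : MvPolynomial (Fin 3) ℂ →ₐ[ℂ] MvPolynomial (Fin 3) ℂ)
      = rename (![1, 2, 0] : Fin 3 → Fin 3) := by
    apply algHom_ext
    intro i; fin_cases i <;> simp
  exact DFunLike.congr_fun h P

private noncomputable def mexp (a b c : ℕ) : Fin 3 →₀ ℕ :=
  Finsupp.single 0 a + Finsupp.single 1 b + Finsupp.single 2 c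

private lemma mexp_apply0 (a b c : ℕ) : mexp a b c 0 = a := by
  simp [mexp, Finsupp.single_apply]

private lemma mexp_apply1 (a b c : ℕ) : mexp a b c 1 = b := by
  simp [mexp, Finsupp.single_apply]

private lemma mexp_apply2 (a b c : ℕ) : mexp a b c 2 = c := by
  simp [mexp, Finsupp.single_apply]

private lemma mexp_eq_iff {a b c a' b' c' : ℕ} :
    mexp a b c = mexp a' b' c' ↔ a = a' ∧ b = b' ∧ c = c' := by
  constructor
  · intro h
    refine ⟨?_, ?_, ?_⟩
    · have := DFunLike.congr_fun h (0 : Fin 3)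
      simpa [mexp_apply0] using this
    · have := DFunLike.congr_fun h (1 : Fin 3)
      simpa [mexp_apply1] using this
    · have := DFunLike.congr_fun h (2 : Fin 3)
      simpa [mexp_apply2] using this
  · rintro ⟨rfl, rfl, rfl⟩; rfl

private lemma mapDomain_mexp (a b c : ℕ) :
    Finsupp.mapDomain (![1, 2, 0] : Fin 3 → Fin 3) (mexp a b c) = mexp c a b := by
  simp only [mexp, Finsupp.mapDomain_add, Finsupp.mapDomain_single]
  simp only [Matrix.cons_val_zero, Matrix.cons_val_one, Matrix.head_cons,
    Matrix.cons_val_two, Matrix.tail_cons]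
  abel

private lemma hK_eq : (X 0 ^ 3 * X 1 + X 1 ^ 3 * X 2 + X 2 ^ 3 * X 0 : MvPolynomial (Fin 3) ℂ)
    = monomial (mexp 3 1 0) 1 + monomial (mexp 0 3 1) 1 + monomial (mexp 1 0 3) 1 := by
  have hX : ∀ i : Fin 3, (X i : MvPolynomial (Fin 3) ℂ) = monomial (Finsupp.single i 1) 1 := by
    intro i; rw [← pow_one (X i), X_pow_eq_monomial]
  rw [X_pow_eq_monomial, X_pow_eq_monomial, X_pow_eq_monomial, hX 1, hX 2, hX 0,
    monomial_mul, monomial_mul, monomial_mul]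
  norm_num [mexp]
  exact add_comm _ _

private lemma coeff_mono_mexp (a b c a' b' c' : ℕ) (r : ℂ) :
    coeff (mexp a b c) (monomial (mexp a' b' c') r)
      = if a' = a ∧ b' = b ∧ c' = c then r else 0 := by
  rw [coeff_monomial]
  by_cases h : a' = a ∧ b' = b ∧ c' = c
  · rw [if_pos h, if_pos (mexp_eq_iff.mpr h)]
  · rw [if_neg h, if_neg fun he => h (mexp_eq_iff.mp he)]

private lemma hK_hom : (X 0 ^ 3 * X 1 + X 1 ^ 3 * X 2 + X 2 ^ 3 * X 0 :
    MvPolynomial (Fin 3) ℂ).IsHomogeneous 4 := by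
  refine IsHomogeneous.add (IsHomogeneous.add ?_ ?_) ?_ <;>
    exact ((isHomogeneous_X ℂ _).pow 3).mul (isHomogeneous_X ℂ _)

theorem klein_quartic_unique_invariant
    (ζ : ℂ) (hζ : IsPrimitiveRoot ζ 7) :
    {P : MvPolynomial (Fin 3) ℂ | P.IsHomogeneous 4 ∧
        aeval ![C ζ * X 0, C (ζ ^ 4) * X 1, C (ζ ^ 2) * X 2] P = P ∧
        aeval ![X 1, X 2, X 0] P = P} =
      {P : MvPolynomial (Fin 3) ℂ |
        ∃ c : ℂ, P = c • (X 0 ^ 3 * X 1 + X 1 ^ 3 * X 2 + X 2 ^ 3 * X 0)} := by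
  have h7 : ζ ^ 7 = 1 := hζ.pow_eq_one
  ext P
  simp only [Set.mem_setOf_eq]
  constructor
  · rintro ⟨hH, hD, hR⟩
    -- coefficient relations
    have hdiag : ∀ d : Fin 3 →₀ ℕ, coeff d P = ζ ^ (d 0 + 4 * d 1 + 2 * d 2) * coeff d P := by
      intro d
      have := coeff_diag ζ P d
      rwa [hD] at this
    have hzero : ∀ d : Fin 3 →₀ ℕ, ¬ (7 ∣ (d 0 + 4 * d 1 + 2 * d 2)) → coeff d P = 0 := by
      intro d hw
      have h1 : ζ ^ (d 0 + 4 * d 1 + 2 * d 2) ≠ 1 := fun h =>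
        hw ((hζ.pow_eq_one_iff_dvd _).mp h)
      have h2 : (ζ ^ (d 0 + 4 * d 1 + 2 * d 2) - 1) * coeff d P = 0 := by
        rw [sub_mul, one_mul, ← hdiag d, sub_self]
      rcases mul_eq_zero.mp h2 with h | h
      · exact absurd (sub_eq_zero.mp h) h1
      · exact h
    have hzero' : ∀ a b c : ℕ, ¬ (7 ∣ (a + 4 * b + 2 * c)) → coeff (mexp a b c) P = 0 := by
      intro a b c h
      refine hzero _ ?_
      rwa [mexp_apply0, mexp_apply1, mexp_apply2]
    have hrot : ∀ a b c : ℕ, coeff (mexp c a b) P = coeff (mexp a b c) P := by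
      intro a b c
      have := coeff_rename_mapDomain (![1, 2, 0] : Fin 3 → Fin 3) (by decide) P (mexp a b c)
      rw [mapDomain_mexp, ← rot_eq, hR] at this
      exact this
    refine ⟨coeff (mexp 3 1 0) P, ?_⟩
    apply MvPolynomial.ext
    intro d
    rw [coeff_smul, smul_eq_mul]
    by_cases hdeg : d.degree = 4
    · have h0 : d 0 + d 1 + d 2 = 4 := by rw [← degree_eq_fin3]; exact hdeg
      have hd4 : d = mexp (d 0) (d 1) (d 2) := by
        ext i
        fin_cases i <;> simp [mexp_apply0, mexp_apply1, mexp_apply2]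
      rw [hd4]
      suffices H : ∀ a b c : ℕ, a + b + c = 4 →
          coeff (mexp a b c) P = coeff (mexp 3 1 0) P *
            coeff (mexp a b c) (X 0 ^ 3 * X 1 + X 1 ^ 3 * X 2 + X 2 ^ 3 * X 0) from
        H _ _ _ h0
      intro a b c habc
      have hKc : coeff (mexp a b c) (X 0 ^ 3 * X 1 + X 1 ^ 3 * X 2 + X 2 ^ 3 * X 0 :
          MvPolynomial (Fin 3) ℂ) =
          (if 3 = a ∧ 1 = b ∧ 0 = c then 1 else 0) +
          (if 0 = a ∧ 3 = b ∧ 1 = c then 1 else 0) +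
          (if 1 = a ∧ 0 = b ∧ 3 = c then 1 else 0) := by
        rw [hK_eq, coeff_add, coeff_add, coeff_mono_mexp, coeff_mono_mexp, coeff_mono_mexp]
      rw [hKc]
      have ha : a ≤ 4 := by omega
      have hb : b ≤ 4 := by omega
      have hc : c ≤ 4 := by omega
      interval_cases a <;> interval_cases b <;> interval_cases c <;> norm_num <;>
        first
          | omega
          | (exact hzero' _ _ _ (by decide))
          | (exact hrot 3 1 0)
          | (rw [hrot 0 3 1]; exact hrot 3 1 0)
    · rw [hH.coeff_eq_zero hdeg, (hK_hom.coeff_eq_zero hdeg : _ = (0:ℂ)), mul_zero]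
  · rintro ⟨c, rfl⟩
    have key : ∀ (α β : ℂ) (i j : Fin 3), α ^ 3 * β = 1 →
        (C α * X i) ^ 3 * (C β * X j) = (X i ^ 3 * X j : MvPolynomial (Fin 3) ℂ) := by
      intro α β i j h
      have : (C α * X i) ^ 3 * (C β * X j) = C (α ^ 3 * β) * (X i ^ 3 * X j) := by
        rw [mul_pow, ← C_pow, C_mul]; ring
      rw [this, h, C_1, one_mul]
    refine ⟨?_, ?_, ?_⟩
    · rw [smul_eq_C_mul]
      exact (isHomogeneous_C _ _).mul hK_hom
    · rw [map_smul]
      congr 1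
      simp only [map_add, map_mul, map_pow, aeval_X]
      simp only [Matrix.cons_val_zero, Matrix.cons_val_one, Matrix.head_cons,
        Matrix.cons_val_two, Matrix.tail_cons]
      simp only [← C_pow]
      rw [key ζ (ζ ^ 4) 0 1 (by rw [← pow_add]; exact h7),
        key (ζ ^ 4) (ζ ^ 2) 1 2 (by rw [← pow_mul, ← pow_add,
          show (4 * 3 + 2 : ℕ) = 7 * 2 from rfl, pow_mul, h7, one_pow]),
        key (ζ ^ 2) ζ 2 0 (by rw [← pow_mul, ← pow_succ]; exact h7)]
    · rw [map_smul]
      congr 1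
      simp only [map_add, map_mul, map_pow, aeval_X]
      simp only [Matrix.cons_val_zero, Matrix.cons_val_one, Matrix.head_cons,
        Matrix.cons_val_two, Matrix.tail_cons]
      ring
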